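/- arXiv:1901.01543 — 7 statements merged into one kernel-verified Lean document; each statement's English description precedes it below -/
import Mathlib

section
/- If u(x,y) solves the Liouville equation u_xx + u_yy = K e^u, then for each ε with σ(x,y;−ε) = 1 + 2εx + ε²(x²+y²) ≠ 0, the function u_ε(x,y) = −2 log σ(x,y;−ε) + u((x + ε(x²+y²))/σ(x,y;−ε), y/σ(x,y;−ε)) also solves u_xx + u_yy = K e^u. -/
open Real

noncomputable section LiouvilleAux

/-- σ(x,y;-ε) -/
def Sf (ε x y : ℝ) : ℝ := 1 + 2*ε*x + ε^2*(x^2+y^2)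
def Pf (ε x y : ℝ) : ℝ := x + ε*(x^2+y^2)
def Xf (ε x y : ℝ) : ℝ := Pf ε x y / Sf ε x y
def Yf (ε x y : ℝ) : ℝ := y / Sf ε x y
def Af (ε x y : ℝ) : ℝ := ((1+ε*x)^2 - ε^2*y^2) / (Sf ε x y)^2
def Bf (ε x y : ℝ) : ℝ := (2*ε*y*(1+ε*x)) / (Sf ε x y)^2
def dLX (ε x y : ℝ) : ℝ := (-2) * ((2*ε^2*Sf ε x y - (2*ε+2*ε^2*x)^2) / (Sf ε x y)^2)
def dLY (ε x y : ℝ) : ℝ := (-2) * ((2*ε^2*Sf ε x y - (2*ε^2*y)^2) / (Sf ε x y)^2)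
def dAX (ε x y : ℝ) : ℝ := 2*ε*(1+ε*x)*(Sf ε x y - 2*((1+ε*x)^2 - ε^2*y^2)) / (Sf ε x y)^3
def dBX (ε x y : ℝ) : ℝ := 2*ε^2*y*(Sf ε x y - 4*(1+ε*x)^2) / (Sf ε x y)^3
def dAY (ε x y : ℝ) : ℝ := -(2*ε^2*y)*(Sf ε x y + 2*((1+ε*x)^2 - ε^2*y^2)) / (Sf ε x y)^3
def dBY (ε x y : ℝ) : ℝ := 2*ε*(1+ε*x)*(Sf ε x y - 4*ε^2*y^2) / (Sf ε x y)^3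

lemma hasDerivAt_Sf_x (ε x y : ℝ) : HasDerivAt (fun t => Sf ε t y) (2*ε+2*ε^2*x) x := by
  have h1 : HasDerivAt (fun t : ℝ => t^2 + y^2) (2*x) x := by
    simpa using (hasDerivAt_pow 2 x).add_const (y^2)
  have h2 := (((hasDerivAt_id x).const_mul (2*ε)).const_add 1).add (h1.const_mul (ε^2))
  exact h2.congr_deriv (by ring)

lemma hasDerivAt_Sf_y (ε x y : ℝ) : HasDerivAt (fun t => Sf ε x t) (2*ε^2*y) y := by
  have h1 : HasDerivAt (fun t : ℝ => x^2 + t^2) (2*y) y := by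
    simpa using (hasDerivAt_pow 2 y).const_add (x^2)
  have h2 := (hasDerivAt_const y (1 + 2*ε*x)).add (h1.const_mul (ε^2))
  exact h2.congr_deriv (by ring)

lemma hasDerivAt_Pf_x (ε x y : ℝ) : HasDerivAt (fun t => Pf ε t y) (1+2*ε*x) x := by
  have h1 : HasDerivAt (fun t : ℝ => t^2 + y^2) (2*x) x := by
    simpa using (hasDerivAt_pow 2 x).add_const (y^2)
  have h2 := (hasDerivAt_id x).add (h1.const_mul ε)
  exact h2.congr_deriv (by ring)

lemma hasDerivAt_Pf_y (ε x y : ℝ) : HasDerivAt (fun t => Pf ε x t) (2*ε*y) y := by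
  have h1 : HasDerivAt (fun t : ℝ => x^2 + t^2) (2*y) y := by
    simpa using (hasDerivAt_pow 2 y).const_add (x^2)
  have h2 := (hasDerivAt_const y x).add (h1.const_mul ε)
  exact h2.congr_deriv (by ring)

lemma hasDerivAt_Xf_x (ε x y : ℝ) (h : Sf ε x y ≠ 0) :
    HasDerivAt (fun t => Xf ε t y) (Af ε x y) x := by
  have h2 := (hasDerivAt_Pf_x ε x y).div (hasDerivAt_Sf_x ε x y) h
  refine h2.congr_deriv ?_
  have h' : (1 + 2*ε*x + ε^2*(x^2+y^2)) ≠ 0 := h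
  unfold Af Sf Pf
  field_simp
  ring

lemma hasDerivAt_Xf_y (ε x y : ℝ) (h : Sf ε x y ≠ 0) :
    HasDerivAt (fun t => Xf ε x t) (Bf ε x y) y := by
  have h2 := (hasDerivAt_Pf_y ε x y).div (hasDerivAt_Sf_y ε x y) h
  refine h2.congr_deriv ?_
  have h' : (1 + 2*ε*x + ε^2*(x^2+y^2)) ≠ 0 := h
  unfold Bf Sf Pf
  field_simp
  ring

lemma hasDerivAt_Yf_x (ε x y : ℝ) (h : Sf ε x y ≠ 0) :
    HasDerivAt (fun t => Yf ε t y) (-(Bf ε x y)) x := by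
  have h2 := (hasDerivAt_const x y).div (hasDerivAt_Sf_x ε x y) h
  refine h2.congr_deriv ?_
  have h' : (1 + 2*ε*x + ε^2*(x^2+y^2)) ≠ 0 := h
  unfold Bf Sf
  field_simp
  ring

lemma hasDerivAt_Yf_y (ε x y : ℝ) (h : Sf ε x y ≠ 0) :
    HasDerivAt (fun t => Yf ε x t) (Af ε x y) y := by
  have h2 := (hasDerivAt_id' y).div (hasDerivAt_Sf_y ε x y) h
  refine h2.congr_deriv ?_
  have h' : (1 + 2*ε*x + ε^2*(x^2+y^2)) ≠ 0 := h
  unfold Af Sf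
  field_simp
  ring

lemma clm_eval (L : ℝ × ℝ →L[ℝ] ℝ) (a b : ℝ) : L (a,b) = a * L (1,0) + b * L (0,1) := by
  have h : ((a,b) : ℝ × ℝ) = a • ((1:ℝ),(0:ℝ)) + b • ((0:ℝ),(1:ℝ)) := by
    simp [Prod.ext_iff]
  rw [h, map_add, map_smul, map_smul, smul_eq_mul, smul_eq_mul]

lemma clm_eval₂ (L : ℝ × ℝ →L[ℝ] (ℝ × ℝ →L[ℝ] ℝ)) (a b : ℝ) (w : ℝ × ℝ) :
    L (a,b) w = a * L (1,0) w + b * L (0,1) w := by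
  have h : ((a,b) : ℝ × ℝ) = a • ((1:ℝ),(0:ℝ)) + b • ((0:ℝ),(1:ℝ)) := by
    simp [Prod.ext_iff]
  rw [h, map_add, map_smul, map_smul]
  simp [ContinuousLinearMap.add_apply, ContinuousLinearMap.smul_apply]

lemma hasDerivAt_dL_x (ε x y : ℝ) (h : Sf ε x y ≠ 0) :
    HasDerivAt (fun t => -2 * ((2*ε+2*ε^2*t) / Sf ε t y)) (dLX ε x y) x := by
  have hpoly : HasDerivAt (fun t : ℝ => 2*ε+2*ε^2*t) (2*ε^2) x := by
    simpa using ((hasDerivAt_id x).const_mul (2*ε^2)).const_add (2*ε)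
  have h2 := (hpoly.div (hasDerivAt_Sf_x ε x y) h).const_mul (-2)
  have e : (-2 : ℝ) * ((2*ε^2 * Sf ε x y - (2*ε+2*ε^2*x) * (2*ε+2*ε^2*x)) / Sf ε x y ^ 2)
      = dLX ε x y := by
    unfold dLX ; ring
  exact e ▸ h2

lemma hasDerivAt_dL_y (ε x y : ℝ) (h : Sf ε x y ≠ 0) :
    HasDerivAt (fun t => -2 * ((2*ε^2*t) / Sf ε x t)) (dLY ε x y) y := by
  have hpoly : HasDerivAt (fun t : ℝ => 2*ε^2*t) (2*ε^2) y := by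
    simpa using (hasDerivAt_id y).const_mul (2*ε^2)
  have h2 := (hpoly.div (hasDerivAt_Sf_y ε x y) h).const_mul (-2)
  have e : (-2 : ℝ) * ((2*ε^2 * Sf ε x y - (2*ε^2*y) * (2*ε^2*y)) / Sf ε x y ^ 2)
      = dLY ε x y := by
    unfold dLY ; ring
  exact e ▸ h2

lemma hasDerivAt_Af_x (ε x y : ℝ) (h : Sf ε x y ≠ 0) :
    HasDerivAt (fun t => Af ε t y) (dAX ε x y) x := by
  have h1 : HasDerivAt (fun t : ℝ => 1+ε*t) ε x := by
    simpa using ((hasDerivAt_id x).const_mul ε).const_add 1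
  have hnum : HasDerivAt (fun t : ℝ => (1+ε*t)^2 - ε^2*y^2) (2*(1+ε*x)*ε) x := by
    have h2 := (h1.pow 2).sub_const (ε^2*y^2)
    have e : ((2:ℕ) : ℝ) * (1+ε*x)^(2-1) * ε = 2*(1+ε*x)*ε := by norm_num
    exact e ▸ h2
  have hden : HasDerivAt (fun t => (Sf ε t y)^2) (2*(Sf ε x y)*(2*ε+2*ε^2*x)) x := by
    have h2 := (hasDerivAt_Sf_x ε x y).pow 2
    have e : ((2:ℕ) : ℝ) * (Sf ε x y)^(2-1) * (2*ε+2*ε^2*x) = 2*(Sf ε x y)*(2*ε+2*ε^2*x) := by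
      push_cast ; ring
    exact e ▸ h2
  have h5 := hnum.div hden (pow_ne_zero 2 h)
  have e : (2*(1+ε*x)*ε * (Sf ε x y)^2 - ((1+ε*x)^2 - ε^2*y^2) * (2*(Sf ε x y)*(2*ε+2*ε^2*x)))
      / ((Sf ε x y)^2)^2 = dAX ε x y := by
    have h' : (1 + 2*ε*x + ε^2*(x^2+y^2)) ≠ 0 := h
    unfold dAX Sf
    field_simp
  exact e ▸ h5

lemma hasDerivAt_Bf_x (ε x y : ℝ) (h : Sf ε x y ≠ 0) :
    HasDerivAt (fun t => Bf ε t y) (dBX ε x y) x := by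
  have hnum : HasDerivAt (fun t : ℝ => 2*ε*y*(1+ε*t)) (2*ε*y*ε) x := by
    have h1 : HasDerivAt (fun t : ℝ => 1+ε*t) ε x := by
      simpa using ((hasDerivAt_id x).const_mul ε).const_add 1
    simpa using h1.const_mul (2*ε*y)
  have hden : HasDerivAt (fun t => (Sf ε t y)^2) (2*(Sf ε x y)*(2*ε+2*ε^2*x)) x := by
    have h2 := (hasDerivAt_Sf_x ε x y).pow 2
    have e : ((2:ℕ) : ℝ) * (Sf ε x y)^(2-1) * (2*ε+2*ε^2*x) = 2*(Sf ε x y)*(2*ε+2*ε^2*x) := by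
      push_cast ; ring
    exact e ▸ h2
  have h5 := hnum.div hden (pow_ne_zero 2 h)
  have e : (2*ε*y*ε * (Sf ε x y)^2 - (2*ε*y*(1+ε*x)) * (2*(Sf ε x y)*(2*ε+2*ε^2*x)))
      / ((Sf ε x y)^2)^2 = dBX ε x y := by
    have h' : (1 + 2*ε*x + ε^2*(x^2+y^2)) ≠ 0 := h
    unfold dBX Sf
    field_simp
    ring
  exact e ▸ h5

lemma hasDerivAt_Af_y (ε x y : ℝ) (h : Sf ε x y ≠ 0) :
    HasDerivAt (fun t => Af ε x t) (dAY ε x y) y := by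
  have hnum : HasDerivAt (fun t : ℝ => (1+ε*x)^2 - ε^2*t^2) (-(ε^2*(2*y))) y := by
    have h1 : HasDerivAt (fun t : ℝ => ε^2*t^2) (ε^2*(2*y)) y := by
      have h0 : HasDerivAt (fun t : ℝ => t^2) (2*y) y := by simpa using hasDerivAt_pow 2 y
      exact h0.const_mul (ε^2)
    exact h1.const_sub ((1+ε*x)^2)
  have hden : HasDerivAt (fun t => (Sf ε x t)^2) (2*(Sf ε x y)*(2*ε^2*y)) y := by
    have h2 := (hasDerivAt_Sf_y ε x y).pow 2
    have e : ((2:ℕ) : ℝ) * (Sf ε x y)^(2-1) * (2*ε^2*y) = 2*(Sf ε x y)*(2*ε^2*y) := by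
      push_cast ; ring
    exact e ▸ h2
  have h5 := hnum.div hden (pow_ne_zero 2 h)
  have e : (-(ε^2*(2*y)) * (Sf ε x y)^2 - ((1+ε*x)^2 - ε^2*y^2) * (2*(Sf ε x y)*(2*ε^2*y)))
      / ((Sf ε x y)^2)^2 = dAY ε x y := by
    have h' : (1 + 2*ε*x + ε^2*(x^2+y^2)) ≠ 0 := h
    unfold dAY Sf
    field_simp
    ring
  exact e ▸ h5

lemma hasDerivAt_Bf_y (ε x y : ℝ) (h : Sf ε x y ≠ 0) :
    HasDerivAt (fun t => Bf ε x t) (dBY ε x y) y := by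
  have hnum : HasDerivAt (fun t : ℝ => 2*ε*t*(1+ε*x)) (2*ε*(1+ε*x)) y := by
    have h1 : HasDerivAt (fun t : ℝ => 2*ε*t*(1+ε*x)) ((2*ε)*(1+ε*x)) y := by
      simpa using ((hasDerivAt_id y).const_mul (2*ε)).mul_const (1+ε*x)
    simpa using h1
  have hden : HasDerivAt (fun t => (Sf ε x t)^2) (2*(Sf ε x y)*(2*ε^2*y)) y := by
    have h2 := (hasDerivAt_Sf_y ε x y).pow 2
    have e : ((2:ℕ) : ℝ) * (Sf ε x y)^(2-1) * (2*ε^2*y) = 2*(Sf ε x y)*(2*ε^2*y) := by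
      push_cast ; ring
    exact e ▸ h2
  have h5 := hnum.div hden (pow_ne_zero 2 h)
  have e : (2*ε*(1+ε*x) * (Sf ε x y)^2 - (2*ε*y*(1+ε*x)) * (2*(Sf ε x y)*(2*ε^2*y)))
      / ((Sf ε x y)^2)^2 = dBY ε x y := by
    have h' : (1 + 2*ε*x + ε^2*(x^2+y^2)) ≠ 0 := h
    unfold dBY Sf
    field_simp
    ring
  exact e ▸ h5

lemma second_deriv_x (F : ℝ × ℝ → ℝ) (hdF : Differentiable ℝ F)
    (hdF1 : Differentiable ℝ (fderiv ℝ F)) (a b : ℝ) :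
    deriv (fun x' => deriv (fun t => F (t, b)) x') a
      = fderiv ℝ (fderiv ℝ F) (a,b) (1,0) (1,0) := by
  have h1 : (fun x' => deriv (fun t => F (t, b)) x') = fun x' => fderiv ℝ F (x', b) (1,0) := by
    funext a'
    exact ((hdF (a',b)).hasFDerivAt.comp_hasDerivAt a'
      ((hasDerivAt_id a').prodMk (hasDerivAt_const a' b))).deriv
  rw [h1]
  have h3 : HasDerivAt (fun x' : ℝ => fderiv ℝ F (x', b) ((1:ℝ),(0:ℝ)))
      (fderiv ℝ (fderiv ℝ F) (a,b) (1,0) (1,0)) a := by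
    have h5 := ((hdF1 (a,b)).hasFDerivAt.comp_hasDerivAt a
      ((hasDerivAt_id a).prodMk (hasDerivAt_const a b)))
    have h4 := h5.clm_apply
        (hasDerivAt_const a ((1:ℝ),(0:ℝ)))
    simpa using h4
  exact h3.deriv

lemma second_deriv_y (F : ℝ × ℝ → ℝ) (hdF : Differentiable ℝ F)
    (hdF1 : Differentiable ℝ (fderiv ℝ F)) (a b : ℝ) :
    deriv (fun y' => deriv (fun t => F (a, t)) y') b
      = fderiv ℝ (fderiv ℝ F) (a,b) (0,1) (0,1) := by
  have h1 : (fun y' => deriv (fun t => F (a, t)) y') = fun y' => fderiv ℝ F (a, y') (0,1) := by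
    funext b'
    exact ((hdF (a,b')).hasFDerivAt.comp_hasDerivAt b'
      ((hasDerivAt_const b' a).prodMk (hasDerivAt_id b'))).deriv
  rw [h1]
  have h3 : HasDerivAt (fun y' : ℝ => fderiv ℝ F (a, y') ((0:ℝ),(1:ℝ)))
      (fderiv ℝ (fderiv ℝ F) (a,b) (0,1) (0,1)) b := by
    have h5 := ((hdF1 (a,b)).hasFDerivAt.comp_hasDerivAt b
      ((hasDerivAt_const b a).prodMk (hasDerivAt_id b)))
    have h4 := h5.clm_apply
        (hasDerivAt_const b ((0:ℝ),(1:ℝ)))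
    simpa using h4
  exact h3.deriv

lemma keyX (F : ℝ × ℝ → ℝ) (hdF : Differentiable ℝ F) (ε t y : ℝ) (h : Sf ε t y ≠ 0) :
    HasDerivAt (fun s => -2 * Real.log (Sf ε s y) + F (Xf ε s y, Yf ε s y))
      (-2 * ((2*ε+2*ε^2*t) / Sf ε t y)
        + (Af ε t y * fderiv ℝ F (Xf ε t y, Yf ε t y) (1,0)
           - Bf ε t y * fderiv ℝ F (Xf ε t y, Yf ε t y) (0,1))) t := by
  have hlog : HasDerivAt (fun s => Real.log (Sf ε s y)) ((2*ε+2*ε^2*t) / Sf ε t y) t :=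
    (hasDerivAt_Sf_x ε t y).log h
  have hcurve : HasDerivAt (fun s => ((Xf ε s y, Yf ε s y) : ℝ × ℝ))
      ((Af ε t y, -(Bf ε t y)) : ℝ × ℝ) t :=
    (hasDerivAt_Xf_x ε t y h).prodMk (hasDerivAt_Yf_x ε t y h)
  have hcomp := (hdF (Xf ε t y, Yf ε t y)).hasFDerivAt.comp_hasDerivAt t hcurve
  have hval : fderiv ℝ F (Xf ε t y, Yf ε t y) (Af ε t y, -(Bf ε t y))
      = Af ε t y * fderiv ℝ F (Xf ε t y, Yf ε t y) (1,0)
        - Bf ε t y * fderiv ℝ F (Xf ε t y, Yf ε t y) (0,1) := by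
    rw [clm_eval]; ring
  rw [hval] at hcomp
  exact (hlog.const_mul (-2)).add hcomp

lemma keyY (F : ℝ × ℝ → ℝ) (hdF : Differentiable ℝ F) (ε x t : ℝ) (h : Sf ε x t ≠ 0) :
    HasDerivAt (fun s => -2 * Real.log (Sf ε x s) + F (Xf ε x s, Yf ε x s))
      (-2 * ((2*ε^2*t) / Sf ε x t)
        + (Bf ε x t * fderiv ℝ F (Xf ε x t, Yf ε x t) (1,0)
           + Af ε x t * fderiv ℝ F (Xf ε x t, Yf ε x t) (0,1))) t := by
  have hlog : HasDerivAt (fun s => Real.log (Sf ε x s)) ((2*ε^2*t) / Sf ε x t) t :=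
    (hasDerivAt_Sf_y ε x t).log h
  have hcurve : HasDerivAt (fun s => ((Xf ε x s, Yf ε x s) : ℝ × ℝ))
      ((Bf ε x t, Af ε x t) : ℝ × ℝ) t :=
    (hasDerivAt_Xf_y ε x t h).prodMk (hasDerivAt_Yf_y ε x t h)
  have hcomp := (hdF (Xf ε x t, Yf ε x t)).hasFDerivAt.comp_hasDerivAt t hcurve
  have hval : fderiv ℝ F (Xf ε x t, Yf ε x t) (Bf ε x t, Af ε x t)
      = Bf ε x t * fderiv ℝ F (Xf ε x t, Yf ε x t) (1,0)
        + Af ε x t * fderiv ℝ F (Xf ε x t, Yf ε x t) (0,1) := by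
    rw [clm_eval]
  rw [hval] at hcomp
  exact (hlog.const_mul (-2)).add hcomp

lemma key2X (F : ℝ × ℝ → ℝ) (hdF1 : Differentiable ℝ (fderiv ℝ F)) (ε x y : ℝ)
    (h : Sf ε x y ≠ 0) (w : ℝ × ℝ) :
    HasDerivAt (fun t => fderiv ℝ F (Xf ε t y, Yf ε t y) w)
      (Af ε x y * fderiv ℝ (fderiv ℝ F) (Xf ε x y, Yf ε x y) (1,0) w
        - Bf ε x y * fderiv ℝ (fderiv ℝ F) (Xf ε x y, Yf ε x y) (0,1) w) x := by
  have hcurve : HasDerivAt (fun s => ((Xf ε s y, Yf ε s y) : ℝ × ℝ))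
      ((Af ε x y, -(Bf ε x y)) : ℝ × ℝ) x :=
    (hasDerivAt_Xf_x ε x y h).prodMk (hasDerivAt_Yf_x ε x y h)
  have h5 := ((hdF1 (Xf ε x y, Yf ε x y)).hasFDerivAt.comp_hasDerivAt x hcurve)
  have h4 := h5.clm_apply
    (hasDerivAt_const x w)
  simp only [map_zero, add_zero] at h4
  have hval : fderiv ℝ (fderiv ℝ F) (Xf ε x y, Yf ε x y) (Af ε x y, -(Bf ε x y)) w
      = Af ε x y * fderiv ℝ (fderiv ℝ F) (Xf ε x y, Yf ε x y) (1,0) w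
        - Bf ε x y * fderiv ℝ (fderiv ℝ F) (Xf ε x y, Yf ε x y) (0,1) w := by
    rw [clm_eval₂]; ring
  rw [hval] at h4
  exact h4

lemma key2Y (F : ℝ × ℝ → ℝ) (hdF1 : Differentiable ℝ (fderiv ℝ F)) (ε x y : ℝ)
    (h : Sf ε x y ≠ 0) (w : ℝ × ℝ) :
    HasDerivAt (fun t => fderiv ℝ F (Xf ε x t, Yf ε x t) w)
      (Bf ε x y * fderiv ℝ (fderiv ℝ F) (Xf ε x y, Yf ε x y) (1,0) w
        + Af ε x y * fderiv ℝ (fderiv ℝ F) (Xf ε x y, Yf ε x y) (0,1) w) y := by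
  have hcurve : HasDerivAt (fun s => ((Xf ε x s, Yf ε x s) : ℝ × ℝ))
      ((Bf ε x y, Af ε x y) : ℝ × ℝ) y :=
    (hasDerivAt_Xf_y ε x y h).prodMk (hasDerivAt_Yf_y ε x y h)
  have h5 := ((hdF1 (Xf ε x y, Yf ε x y)).hasFDerivAt.comp_hasDerivAt y hcurve)
  have h4 := h5.clm_apply
    (hasDerivAt_const y w)
  simp only [map_zero, add_zero] at h4
  have hval : fderiv ℝ (fderiv ℝ F) (Xf ε x y, Yf ε x y) (Bf ε x y, Af ε x y) w
      = Bf ε x y * fderiv ℝ (fderiv ℝ F) (Xf ε x y, Yf ε x y) (1,0) w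
        + Af ε x y * fderiv ℝ (fderiv ℝ F) (Xf ε x y, Yf ε x y) (0,1) w := by
    rw [clm_eval₂]
  rw [hval] at h4
  exact h4

lemma deriv2X (F : ℝ × ℝ → ℝ) (hdF1 : Differentiable ℝ (fderiv ℝ F)) (ε x y : ℝ)
    (h : Sf ε x y ≠ 0) :
    HasDerivAt (fun t => -2 * ((2*ε+2*ε^2*t) / Sf ε t y)
        + (Af ε t y * fderiv ℝ F (Xf ε t y, Yf ε t y) (1,0)
           - Bf ε t y * fderiv ℝ F (Xf ε t y, Yf ε t y) (0,1)))
      (dLX ε x y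
        + ((dAX ε x y * fderiv ℝ F (Xf ε x y, Yf ε x y) (1,0)
            + Af ε x y * (Af ε x y * fderiv ℝ (fderiv ℝ F) (Xf ε x y, Yf ε x y) (1,0) (1,0)
                - Bf ε x y * fderiv ℝ (fderiv ℝ F) (Xf ε x y, Yf ε x y) (0,1) (1,0)))
          - (dBX ε x y * fderiv ℝ F (Xf ε x y, Yf ε x y) (0,1)
            + Bf ε x y * (Af ε x y * fderiv ℝ (fderiv ℝ F) (Xf ε x y, Yf ε x y) (1,0) (0,1)
                - Bf ε x y * fderiv ℝ (fderiv ℝ F) (Xf ε x y, Yf ε x y) (0,1) (0,1))))) x :=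
  (hasDerivAt_dL_x ε x y h).add
    (((hasDerivAt_Af_x ε x y h).mul (key2X F hdF1 ε x y h (1,0))).sub
      ((hasDerivAt_Bf_x ε x y h).mul (key2X F hdF1 ε x y h (0,1))))

lemma deriv2Y (F : ℝ × ℝ → ℝ) (hdF1 : Differentiable ℝ (fderiv ℝ F)) (ε x y : ℝ)
    (h : Sf ε x y ≠ 0) :
    HasDerivAt (fun t => -2 * ((2*ε^2*t) / Sf ε x t)
        + (Bf ε x t * fderiv ℝ F (Xf ε x t, Yf ε x t) (1,0)
           + Af ε x t * fderiv ℝ F (Xf ε x t, Yf ε x t) (0,1)))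
      (dLY ε x y
        + ((dBY ε x y * fderiv ℝ F (Xf ε x y, Yf ε x y) (1,0)
            + Bf ε x y * (Bf ε x y * fderiv ℝ (fderiv ℝ F) (Xf ε x y, Yf ε x y) (1,0) (1,0)
                + Af ε x y * fderiv ℝ (fderiv ℝ F) (Xf ε x y, Yf ε x y) (0,1) (1,0)))
          + (dAY ε x y * fderiv ℝ F (Xf ε x y, Yf ε x y) (0,1)
            + Af ε x y * (Bf ε x y * fderiv ℝ (fderiv ℝ F) (Xf ε x y, Yf ε x y) (1,0) (0,1)
                + Af ε x y * fderiv ℝ (fderiv ℝ F) (Xf ε x y, Yf ε x y) (0,1) (0,1))))) y :=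
  (hasDerivAt_dL_y ε x y h).add
    (((hasDerivAt_Bf_y ε x y h).mul (key2Y F hdF1 ε x y h (1,0))).add
      ((hasDerivAt_Af_y ε x y h).mul (key2Y F hdF1 ε x y h (0,1))))

end LiouvilleAux

/-- Conformal symmetry of the elliptic Liouville equation. -/
theorem stmt_3 (K ε : ℝ) (u : ℝ → ℝ → ℝ)
    (hC : ContDiff ℝ 2 (fun p : ℝ × ℝ => u p.1 p.2))
    (hu : ∀ x y : ℝ,
      deriv (fun x' => deriv (fun x'' => u x'' y) x') x
      + deriv (fun y' => deriv (fun y'' => u x y'') y') y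
      = K * Real.exp (u x y)) :
    ∀ x y : ℝ, 1 + 2*ε*x + ε^2*(x^2+y^2) ≠ 0 →
      let σm : ℝ → ℝ → ℝ := fun x y => 1 + 2*ε*x + ε^2*(x^2+y^2)
      let v : ℝ → ℝ → ℝ := fun x y =>
        -2 * Real.log (σm x y)
          + u ((x + ε*(x^2+y^2)) / σm x y) (y / σm x y)
      deriv (fun x' => deriv (fun x'' => v x'' y) x') x
      + deriv (fun y' => deriv (fun y'' => v x y'') y') y
      = K * Real.exp (v x y) := by
  intro x y hS σm v
  set F : ℝ × ℝ → ℝ := fun p => u p.1 p.2 with hFdef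
  have hdF : Differentiable ℝ F := hC.differentiable (by norm_num)
  have hF1 : ContDiff ℝ 1 (fderiv ℝ F) := hC.fderiv_right (by norm_num)
  have hdF1 : Differentiable ℝ (fderiv ℝ F) := hF1.differentiable (by norm_num)
  have hS' : Sf ε x y ≠ 0 := hS
  -- translate the Liouville equation into fderiv language
  have hu' : ∀ a b : ℝ,
      fderiv ℝ (fderiv ℝ F) (a,b) (1,0) (1,0) + fderiv ℝ (fderiv ℝ F) (a,b) (0,1) (0,1)
        = K * Real.exp (F (a,b)) := by
    intro a b
    have e1 : deriv (fun x' => deriv (fun x'' => u x'' b) x') a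
        = fderiv ℝ (fderiv ℝ F) (a,b) (1,0) (1,0) := second_deriv_x F hdF hdF1 a b
    have e2 : deriv (fun y' => deriv (fun y'' => u a y'') y') b
        = fderiv ℝ (fderiv ℝ F) (a,b) (0,1) (0,1) := second_deriv_y F hdF hdF1 a b
    have h := hu a b
    rw [e1, e2] at h
    exact h
  have hevx : ∀ᶠ t in nhds x, Sf ε t y ≠ 0 :=
    (hasDerivAt_Sf_x ε x y).continuousAt.eventually_ne hS'
  have hevy : ∀ᶠ t in nhds y, Sf ε x t ≠ 0 :=
    (hasDerivAt_Sf_y ε x y).continuousAt.eventually_ne hS'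
  have T1 : deriv (fun x' => deriv (fun x'' => v x'' y) x') x
      = deriv (fun t => -2 * ((2*ε+2*ε^2*t) / Sf ε t y)
          + (Af ε t y * fderiv ℝ F (Xf ε t y, Yf ε t y) (1,0)
             - Bf ε t y * fderiv ℝ F (Xf ε t y, Yf ε t y) (0,1))) x := by
    apply Filter.EventuallyEq.deriv_eq
    filter_upwards [hevx] with t ht
    exact (keyX F hdF ε t y ht).deriv
  have T2 : deriv (fun y' => deriv (fun y'' => v x y'') y') y
      = deriv (fun t => -2 * ((2*ε^2*t) / Sf ε x t)
          + (Bf ε x t * fderiv ℝ F (Xf ε x t, Yf ε x t) (1,0)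
             + Af ε x t * fderiv ℝ F (Xf ε x t, Yf ε x t) (0,1))) y := by
    apply Filter.EventuallyEq.deriv_eq
    filter_upwards [hevy] with t ht
    exact (keyY F hdF ε x t ht).deriv
  rw [T1, T2, (deriv2X F hdF1 ε x y hS').deriv, (deriv2Y F hdF1 ε x y hS').deriv]
  have hgoalrhs : v x y = -2 * Real.log (Sf ε x y) + F (Xf ε x y, Yf ε x y) := rfl
  rw [hgoalrhs, Real.exp_add]
  have hsq : (0:ℝ) < (Sf ε x y)^2 :=
    lt_of_le_of_ne (sq_nonneg _) (Ne.symm (pow_ne_zero 2 hS'))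
  have hexp : Real.exp (-2 * Real.log (Sf ε x y)) = ((Sf ε x y)^2)⁻¹ := by
    rw [show (-2 : ℝ) * Real.log (Sf ε x y) = -Real.log ((Sf ε x y)^2) by
      rw [Real.log_pow]; push_cast; ring]
    rw [Real.exp_neg, Real.exp_log hsq]
  rw [hexp]
  have hM := hu' (Xf ε x y) (Yf ε x y)
  have hM22 : fderiv ℝ (fderiv ℝ F) (Xf ε x y, Yf ε x y) (0,1) (0,1)
      = K * Real.exp (F (Xf ε x y, Yf ε x y))
        - fderiv ℝ (fderiv ℝ F) (Xf ε x y, Yf ε x y) (1,0) (1,0) := by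
    linarith
  rw [hM22]
  have h0 : (1 + 2*ε*x + ε^2*(x^2+y^2)) ≠ 0 := hS
  unfold dLX dLY dAX dBX dAY dBY Af Bf Sf
  field_simp
  ring
end

section
/- For a ≠ 0, b real, the curve defined implicitly by a y² + (2b/3)xy + (1 + b²/(9a))x² + C₁(y + (b/(3a))x) + C₂ = 0 satisfies, wherever y is a C² function of x, the ODE x y'' = a y'³ + b y'² + (1 + b²/(3a)) y' + b(9a+b²)/(27a²). -/
lemma deriv_eq_zero_of_eqOn_zero {s : Set ℝ} (hs : IsOpen s) {f : ℝ → ℝ} {x : ℝ} {d : ℝ}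
    (hf : ∀ z ∈ s, f z = 0) (hx : x ∈ s) (hd : HasDerivAt f d x) : d = 0 := by
  have hev : f =ᶠ[nhds x] fun _ => (0:ℝ) :=
    Filter.eventuallyEq_of_mem (hs.mem_nhds hx) hf
  rw [← hd.deriv, hev.deriv_eq, deriv_const]

/-- The implicit conic family solves the linearizable second-order ODE. -/
theorem stmt_5 (a b C₁ C₂ : ℝ) (ha : a ≠ 0) (s : Set ℝ) (hs : IsOpen s)
    (y : ℝ → ℝ) (hy : ContDiffOn ℝ 2 y s)
    (hcurve : ∀ x ∈ s, a * (y x)^2 + (2*b/3)*x*(y x) + (1 + b^2/(9*a))*x^2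
      + C₁*(y x + (b/(3*a))*x) + C₂ = 0) :
    ∀ x ∈ s, x * deriv (deriv y) x
      = a * (deriv y x)^3 + b * (deriv y x)^2 + (1 + b^2/(3*a)) * deriv y x
        + b*(9*a + b^2)/(27*a^2) := by
  have hy1 : DifferentiableOn ℝ y s := hy.differentiableOn (by norm_num)
  have hy2 : ContDiffOn ℝ 1 (deriv y) s := hy.deriv_of_isOpen hs (by norm_num)
  have hdy : ∀ x ∈ s, HasDerivAt y (deriv y x) x := fun x hx =>
    (hy1.differentiableAt (hs.mem_nhds hx)).hasDerivAt
  -- first implicit differentiation, valid on all of s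
  have eq1 : ∀ x ∈ s,
      2*a*(y x)*(deriv y x) + (2*b/3)*(y x) + (2*b/3)*x*(deriv y x)
        + 2*(1 + b^2/(9*a))*x + C₁*(deriv y x + b/(3*a)) = 0 := by
    intro x hx
    have hd := hdy x hx
    have H : HasDerivAt
        (fun t => a*(y t)^2 + (2*b/3)*t*(y t) + (1 + b^2/(9*a))*t^2
          + C₁*(y t + (b/(3*a))*t) + C₂)
        (2*a*(y x)*(deriv y x) + (2*b/3)*(y x) + (2*b/3)*x*(deriv y x)
          + 2*(1 + b^2/(9*a))*x + C₁*(deriv y x + b/(3*a))) x := by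
      have h := (((((hd.pow 2).const_mul a).add
          (((hasDerivAt_id' (𝕜 := ℝ) (x := x)).const_mul (2*b/3)).mul hd)).add
          ((hasDerivAt_pow 2 x).const_mul (1 + b^2/(9*a)))).add
          ((hd.add ((hasDerivAt_id' (𝕜 := ℝ) (x := x)).const_mul (b/(3*a)))).const_mul C₁)).add
          (hasDerivAt_const x C₂)
      exact h.congr_deriv (by push_cast; ring)
    exact deriv_eq_zero_of_eqOn_zero hs hcurve hx H
  intro x hx
  set Y := y x with hY
  set p := deriv y x with hp
  set q := deriv (deriv y) x with hq
  have hd := hdy x hx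
  have hdd : HasDerivAt (deriv y) q x :=
    ((hy2.differentiableOn (by norm_num)).differentiableAt (hs.mem_nhds hx)).hasDerivAt
  -- second implicit differentiation at x
  have h2 : 2*a*p*p + 2*a*Y*q + (2*b/3)*p + (2*b/3)*p + (2*b/3)*x*q
      + 2*(1 + b^2/(9*a)) + C₁*q = 0 := by
    have H : HasDerivAt
        (fun t => 2*a*(y t)*(deriv y t) + (2*b/3)*(y t) + (2*b/3)*t*(deriv y t)
          + 2*(1 + b^2/(9*a))*t + C₁*(deriv y t + b/(3*a)))
        (2*a*p*p + 2*a*Y*q + (2*b/3)*p + (2*b/3)*p + (2*b/3)*x*q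
          + 2*(1 + b^2/(9*a)) + C₁*q) x := by
      have h := (((((hd.const_mul (2*a)).mul hdd).add
          (hd.const_mul (2*b/3))).add
          ((((hasDerivAt_id' (𝕜 := ℝ) (x := x)).const_mul (2*b/3)).mul hdd))).add
          ((hasDerivAt_id' (𝕜 := ℝ) (x := x)).const_mul (2*(1 + b^2/(9*a))))).add
          ((hdd.add (hasDerivAt_const x (b/(3*a)))).const_mul C₁)
      exact h.congr_deriv (by push_cast; ring)
    exact deriv_eq_zero_of_eqOn_zero hs eq1 hx H
  have h1 := eq1 x hx
  rw [← hY, ← hp] at h1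
  -- algebra
  field_simp at h1 h2
  have key : (6*a^2*Y + 2*a*b*x + 3*a*C₁) *
      (162*a^2*x*q - 162*a^3*p^3 - 162*a^2*b*p^2 - 162*a^2*p - 54*a*b^2*p - 54*a*b - 6*b^3) = 0 := by
    linear_combination (18*a^2*x)*h2 - (3*a)*(6*a^2*p^2 + 4*a*b*p + 6*a + 2*b^2/3)*h1
  rcases mul_eq_zero.mp key with hD3 | hF2
  · have hx0 : 162*a^2*x = 0 := by linear_combination 3*a*h1 - (27*a*p + 9*b)*hD3
    have hR : 54*a^2*p^2 + 36*a*b*p + 54*a + 6*b^2 = 0 := by linear_combination h2 - 9*q*hD3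
    field_simp
    linear_combination (q/2)*hx0 - ((3*a*p + b)/2)*hR
  · field_simp
    linear_combination (1/2)*hF2
end

section
/- If y(x) > 0 satisfies the second member of the Riccati chain y'' + 3yy' + y³ = 0 on an interval where y' + y² ≠ 0, then s = x/y − x²/2 as a function of r = x − 1/y satisfies d²s/dr² = 0; equivalently, d²s/dr² = −y³(y'' + 3yy' + y³)/(y² + y')³. -/
/-- Linearization of the second member of the Riccati chain:
s = x/y − x²/2 as a function of r = x − 1/y satisfies d²s/dr² = 0. -/
theorem stmt_6 (s : Set ℝ) (hs : IsOpen s) (y : ℝ → ℝ)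
    (hy : ContDiffOn ℝ 2 y s)
    (hne : ∀ x ∈ s, y x ≠ 0)
    (hreg : ∀ x ∈ s, deriv y x + (y x)^2 ≠ 0)
    (hode : ∀ x ∈ s, deriv (deriv y) x + 3 * y x * deriv y x + (y x)^3 = 0) :
    ∀ x ∈ s,
      deriv (fun t => deriv (fun t' => t' / y t' - t'^2/2) t
          / deriv (fun t' => t' - 1 / y t') t) x
        / deriv (fun t' => t' - 1 / y t') x = 0 := by
  intro x hx
  -- first derivatives of y
  have h1 : ∀ t ∈ s, HasDerivAt y (deriv y t) t := by
    intro t ht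
    exact ((hy.differentiableOn (by norm_num)).differentiableAt
      (hs.mem_nhds ht)).hasDerivAt
  -- second derivatives
  have hy' : ContDiffOn ℝ 1 (deriv y) s := by
    exact hy.deriv_of_isOpen (m := 1) hs (by norm_num)
  have h2 : ∀ t ∈ s, HasDerivAt (deriv y) (deriv (deriv y) t) t := by
    intro t ht
    exact ((hy'.differentiableOn (by norm_num)).differentiableAt
      (hs.mem_nhds ht)).hasDerivAt
  -- explicit formulas for the inner derivatives on s
  have hA : ∀ t ∈ s, deriv (fun t' => t' / y t' - t'^2/2) t
      = (1 * y t - t * deriv y t) / (y t)^2 - t := by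
    intro t ht
    have hd : HasDerivAt (fun t' => t' / y t' - t'^2/2)
        ((1 * y t - t * deriv y t) / (y t)^2 - (2 * t^(2-1) / 2)) t := by
      have := ((hasDerivAt_id t).div (h1 t ht) (hne t ht)).sub
        (((hasDerivAt_pow 2 t)).div_const 2)
      exact this.congr_deriv (by norm_num)
    have := hd.deriv
    simpa using this
  have hB : ∀ t ∈ s, deriv (fun t' => t' - 1 / y t') t
      = 1 - (0 * y t - 1 * deriv y t) / (y t)^2 := by
    intro t ht
    have hd : HasDerivAt (fun t' => t' - 1 / y t')
        (1 - (0 * y t - 1 * deriv y t) / (y t)^2) t := by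
      exact (hasDerivAt_id t).sub ((hasDerivAt_const t 1).div (h1 t ht) (hne t ht))
    exact hd.deriv
  -- the quotient function agrees with an explicit rational function on s
  set F : ℝ → ℝ := fun t =>
    (y t - t * deriv y t - t * (y t)^2) / ((y t)^2 + deriv y t) with hF
  have hD : ∀ t ∈ s, (y t)^2 + deriv y t ≠ 0 := by
    intro t ht
    have := hreg t ht
    intro h; apply this; linarith
  have heq : ∀ t ∈ s,
      deriv (fun t' => t' / y t' - t'^2/2) t / deriv (fun t' => t' - 1 / y t') t
        = F t := by
    intro t ht
    rw [hA t ht, hB t ht, hF]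
    have h0 := hne t ht
    have h1' := hD t ht
    have h2' : 1 - (0 * y t - 1 * deriv y t) / (y t)^2 = ((y t)^2 + deriv y t) / (y t)^2 := by
      field_simp; ring
    rw [h2']
    field_simp
  -- F has derivative 0 at x
  have hnum : HasDerivAt (fun t => y t - t * deriv y t - t * (y t)^2)
      (deriv y x - (1 * deriv y x + x * deriv (deriv y) x)
        - (1 * (y x)^2 + x * (2 * y x * deriv y x))) x := by
    have hy2 : HasDerivAt (fun t => (y t)^2) (2 * y x * deriv y x) x := by
      have := (h1 x hx).pow 2
      exact this.congr_deriv (by norm_num <;> ring)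
    exact ((h1 x hx).sub ((hasDerivAt_id x).mul (h2 x hx))).sub
      ((hasDerivAt_id x).mul hy2)
  have hden : HasDerivAt (fun t => (y t)^2 + deriv y t)
      (2 * y x * deriv y x + deriv (deriv y) x) x := by
    have hy2 : HasDerivAt (fun t => (y t)^2) (2 * y x * deriv y x) x := by
      have := (h1 x hx).pow 2
      exact this.congr_deriv (by norm_num <;> ring)
    exact hy2.add (h2 x hx)
  have hFd : HasDerivAt F
      (((deriv y x - (1 * deriv y x + x * deriv (deriv y) x)
          - (1 * (y x)^2 + x * (2 * y x * deriv y x))) * ((y x)^2 + deriv y x)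
        - (y x - x * deriv y x - x * (y x)^2)
          * (2 * y x * deriv y x + deriv (deriv y) x)) / ((y x)^2 + deriv y x)^2)
      x := hnum.div hden (hD x hx)
  have hzero : ((deriv y x - (1 * deriv y x + x * deriv (deriv y) x)
          - (1 * (y x)^2 + x * (2 * y x * deriv y x))) * ((y x)^2 + deriv y x)
        - (y x - x * deriv y x - x * (y x)^2)
          * (2 * y x * deriv y x + deriv (deriv y) x)) = 0 := by
    linear_combination (-(y x)) * hode x hx
  have hFd0 : deriv F x = 0 := by
    rw [hFd.deriv, hzero, zero_div]
  have hgF : (fun t => deriv (fun t' => t' / y t' - t'^2/2) t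
      / deriv (fun t' => t' - 1 / y t') t) =ᶠ[nhds x] F :=
    Filter.eventuallyEq_of_mem (hs.mem_nhds hx) heq
  rw [hgF.deriv_eq, hFd0, zero_div]
end

section
/- For real constants α, K, the Ermakov–Pinney equation y'' − α²y = K y⁻³ is solved by y(x) = √(A e^{2αx} + B + C e^{−2αx}) on any interval where A e^{2αx} + B + C e^{−2αx} > 0, provided (4AC − B²)α² = K. -/
/-- Explicit solution of the Ermakov–Pinney equation y'' − α²y = K y⁻³. -/
theorem stmt_8 (α K A B C : ℝ) (hK : (4*A*C - B^2) * α^2 = K)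
    (s : Set ℝ) (hs : IsOpen s)
    (hpos : ∀ x ∈ s, A * Real.exp (2*α*x) + B + C * Real.exp (-2*α*x) > 0) :
    ∀ x ∈ s,
      deriv (deriv (fun t =>
          Real.sqrt (A * Real.exp (2*α*t) + B + C * Real.exp (-2*α*t)))) x
        - α^2 * Real.sqrt (A * Real.exp (2*α*x) + B + C * Real.exp (-2*α*x))
      = K / (Real.sqrt (A * Real.exp (2*α*x) + B + C * Real.exp (-2*α*x)))^3 := by
  intro x hx
  set u : ℝ → ℝ := fun t => A * Real.exp (2*α*t) + B + C * Real.exp (-2*α*t) with hu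
  set v : ℝ → ℝ := fun t => 2*α*(A * Real.exp (2*α*t)) - 2*α*(C * Real.exp (-2*α*t)) with hv
  have hE : ∀ t : ℝ, HasDerivAt (fun s : ℝ => Real.exp (2*α*s)) (2*α*Real.exp (2*α*t)) t := by
    intro t
    have h1 : HasDerivAt (fun s : ℝ => 2*α*s) (2*α) t := by
      simpa using (hasDerivAt_id t).const_mul (2*α)
    simpa [mul_comm] using h1.exp
  have hF : ∀ t : ℝ, HasDerivAt (fun s : ℝ => Real.exp (-2*α*s)) (-2*α*Real.exp (-2*α*t)) t := by
    intro t
    have h1 : HasDerivAt (fun s : ℝ => -2*α*s) (-2*α) t := by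
      simpa using (hasDerivAt_id t).const_mul (-2*α)
    simpa [mul_comm] using h1.exp
  have hud : ∀ t : ℝ, HasDerivAt u (v t) t := by
    intro t
    have := (((hE t).const_mul A).add_const B).add ((hF t).const_mul C)
    refine this.congr_deriv ?_
    simp [hv]; ring
  have hvd : ∀ t : ℝ, HasDerivAt v (4*α^2*(A * Real.exp (2*α*t)) + 4*α^2*(C * Real.exp (-2*α*t))) t := by
    intro t
    have := (((hE t).const_mul A).const_mul (2*α)).sub (((hF t).const_mul C).const_mul (2*α))
    refine this.congr_deriv ?_
    ring
  have hfd : ∀ t ∈ s, HasDerivAt (fun r => Real.sqrt (u r)) (v t / (2 * Real.sqrt (u t))) t := by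
    intro t ht
    exact (hud t).sqrt (ne_of_gt (hpos t ht))
  -- deriv of f equals g on a neighborhood of x
  have hEv : (deriv (fun r => Real.sqrt (u r))) =ᶠ[nhds x]
      (fun t => v t / (2 * Real.sqrt (u t))) := by
    filter_upwards [hs.mem_nhds hx] with t ht
    exact (hfd t ht).deriv
  have hSx : Real.sqrt (u x) > 0 := Real.sqrt_pos.mpr (hpos x hx)
  set S := Real.sqrt (u x) with hS
  have hS0 : S ≠ 0 := ne_of_gt hSx
  have hS2 : S^2 = u x := Real.sq_sqrt (le_of_lt (hpos x hx))
  -- derivative of g at x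
  have hwd : HasDerivAt (fun t => 2 * Real.sqrt (u t)) (2 * (v x / (2 * S))) x :=
    (hfd x hx).const_mul 2
  have hgd : HasDerivAt (fun t => v t / (2 * Real.sqrt (u t)))
      (((4*α^2*(A * Real.exp (2*α*x)) + 4*α^2*(C * Real.exp (-2*α*x))) * (2*S)
        - v x * (2 * (v x / (2 * S)))) / (2*S)^2) x := by
    exact (hvd x).div hwd (by simpa using mul_ne_zero two_ne_zero hS0)
  have hderiv2 : deriv (deriv (fun r => Real.sqrt (u r))) x
      = ((4*α^2*(A * Real.exp (2*α*x)) + 4*α^2*(C * Real.exp (-2*α*x))) * (2*S)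
        - v x * (2 * (v x / (2 * S)))) / (2*S)^2 := by
    rw [hEv.deriv_eq]
    exact hgd.deriv
  rw [hderiv2]
  set E := Real.exp (2*α*x) with hEdef
  set F := Real.exp (-2*α*x) with hFdef
  have hEF : E * F = 1 := by
    rw [hEdef, hFdef, ← Real.exp_add]; norm_num
  have hvx : v x = 2*α*(A*E) - 2*α*(C*F) := rfl
  have hux : u x = A*E + B + C*F := rfl
  have h4 : 2*S^2*(4*α^2*(A*E) + 4*α^2*(C*F)) - (v x)^2 - 4*α^2*S^4 = 4*K := by
    rw [hvx]
    have hS2' : S^2 = A*E + B + C*F := by rw [hS2, hux]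
    linear_combination (-8*α^2*B - 4*α^2*S^2 + 4*α^2*(A*E+B+C*F)) * hS2'
      + 16*α^2*A*C*hEF + 4*hK
  have : ((4*α^2*(A * E) + 4*α^2*(C * F)) * (2*S) - v x * (2 * (v x / (2 * S)))) / (2*S)^2
      = (2*S^2*(4*α^2*(A*E) + 4*α^2*(C*F)) - (v x)^2 - 4*α^2*S^4) / (4*S^3) + α^2*S := by
    field_simp
    ring
  rw [this, h4]
  field_simp
  ring
end

section
/- For t > 0, x > 0, y > 0, the function K(t,x) = (π t y)^{-1/2} exp(−(x+y)/t) cosh(2√(xy)/t) satisfies the degenerate diffusion equation K_t = x K_xx + (1/2) K_x. -/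
-- first derivative in x, at any x > 0
lemma auxKx (y t : ℝ) (hy : 0 < y) (ht : 0 < t) (x : ℝ) (hx : 0 < x) :
    HasDerivAt (fun u => (Real.pi * t * y) ^ (-(1:ℝ)/2) * Real.exp (-(u+y)/t)
          * Real.cosh (2 * Real.sqrt (u*y) / t))
      ((Real.pi * t * y) ^ (-(1:ℝ)/2) * Real.exp (-(x+y)/t) *
        (Real.sinh (2 * Real.sqrt (x*y) / t) * y / (Real.sqrt (x*y) * t)
          - Real.cosh (2 * Real.sqrt (x*y) / t) / t)) x := by
  have hxy : 0 < x * y := mul_pos hx hy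
  have hs : 0 < Real.sqrt (x*y) := Real.sqrt_pos.mpr hxy
  have hsq : HasDerivAt (fun u : ℝ => Real.sqrt (u*y)) (1 / (2 * Real.sqrt (x*y)) * (1*y)) x := by
    exact (Real.hasDerivAt_sqrt hxy.ne').comp x ((hasDerivAt_id x).mul_const y)
  have hexp : HasDerivAt (fun u : ℝ => Real.exp (-(u+y)/t))
      (Real.exp (-(x+y)/t) * (-1/t)) x := by
    have h1 : HasDerivAt (fun u : ℝ => -(u+y)/t) (-1/t) x := by
      simpa using (((hasDerivAt_id x).add_const y).neg.div_const t)
    exact h1.exp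
  have hcosh : HasDerivAt (fun u : ℝ => Real.cosh (2 * Real.sqrt (u*y) / t))
      (Real.sinh (2 * Real.sqrt (x*y) / t) * (2 * (1 / (2 * Real.sqrt (x*y)) * (1*y)) / t)) x :=
    ((hsq.const_mul 2).div_const t).cosh
  have H := ((hexp.const_mul ((Real.pi * t * y) ^ (-(1:ℝ)/2))).mul hcosh)
  convert H using 1
  all_goals try rfl
  field_simp
  ring

-- derivative in x of the first x-derivative
lemma auxKxx (y t : ℝ) (hy : 0 < y) (ht : 0 < t) (x : ℝ) (hx : 0 < x) :
    HasDerivAt (fun u => (Real.pi * t * y) ^ (-(1:ℝ)/2) * Real.exp (-(u+y)/t) *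
        (Real.sinh (2 * Real.sqrt (u*y) / t) * y / (Real.sqrt (u*y) * t)
          - Real.cosh (2 * Real.sqrt (u*y) / t) / t))
      ((Real.pi * t * y) ^ (-(1:ℝ)/2) * Real.exp (-(x+y)/t) *
        ((1/t^2 + y^2/((Real.sqrt (x*y))^2 * t^2)) * Real.cosh (2 * Real.sqrt (x*y) / t)
          - (2*y/(Real.sqrt (x*y) * t^2) + y^2/(2*(Real.sqrt (x*y))^3*t))
            * Real.sinh (2 * Real.sqrt (x*y) / t))) x := by
  have hxy : 0 < x * y := mul_pos hx hy
  have hs : 0 < Real.sqrt (x*y) := Real.sqrt_pos.mpr hxy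
  have hsq : HasDerivAt (fun u : ℝ => Real.sqrt (u*y)) (1 / (2 * Real.sqrt (x*y)) * (1*y)) x :=
    (Real.hasDerivAt_sqrt hxy.ne').comp x ((hasDerivAt_id x).mul_const y)
  have hexp : HasDerivAt (fun u : ℝ => Real.exp (-(u+y)/t))
      (Real.exp (-(x+y)/t) * (-1/t)) x := by
    have h1 : HasDerivAt (fun u : ℝ => -(u+y)/t) (-1/t) x := by
      simpa using (((hasDerivAt_id x).add_const y).neg.div_const t)
    exact h1.exp
  have harg : HasDerivAt (fun u : ℝ => 2 * Real.sqrt (u*y) / t)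
      ((2 * (1 / (2 * Real.sqrt (x*y)) * (1*y))) / t) x := (hsq.const_mul 2).div_const t
  have hcosh := harg.cosh
  have hsinh := harg.sinh
  have h1 := hsinh.mul_const y
  have h2 := hsq.mul_const t
  have hne : Real.sqrt (x*y) * t ≠ 0 := by positivity
  have hdivd := h1.div h2 hne
  have hdiff := hdivd.sub (hcosh.div_const t)
  have H := (hexp.const_mul ((Real.pi * t * y) ^ (-(1:ℝ)/2))).mul hdiff
  convert H using 1
  all_goals try rfl
  simp only [Pi.mul_apply, Pi.div_apply, Pi.sub_apply]
  field_simp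
  ring

-- derivative in t
lemma auxKt (y t x : ℝ) (hy : 0 < y) (ht : 0 < t) (hx : 0 < x) :
    HasDerivAt (fun t' => (Real.pi * t' * y) ^ (-(1:ℝ)/2) * Real.exp (-(x+y)/t')
          * Real.cosh (2 * Real.sqrt (x*y) / t'))
      ((Real.pi * t * y) ^ (-(1:ℝ)/2) * Real.exp (-(x+y)/t) *
        ((-(1:ℝ)/(2*t) + (x+y)/t^2) * Real.cosh (2 * Real.sqrt (x*y) / t)
          - (2*Real.sqrt (x*y)/t^2) * Real.sinh (2 * Real.sqrt (x*y) / t))) t := by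
  have hpos : 0 < Real.pi * t * y := by positivity
  have hinner : HasDerivAt (fun t' : ℝ => Real.pi * t' * y) (Real.pi * 1 * y) t :=
    ((hasDerivAt_id t).const_mul Real.pi).mul_const y
  have hc1 : HasDerivAt (fun t' : ℝ => (Real.pi * t' * y) ^ (-(1:ℝ)/2))
      ((-(1:ℝ)/2) * (Real.pi * t * y) ^ (-(1:ℝ)/2 - 1) * (Real.pi * 1 * y)) t :=
    (Real.hasDerivAt_rpow_const (Or.inl hpos.ne')).comp (h₂ := fun u : ℝ => u ^ (-(1:ℝ)/2)) t hinner
  have hexp : HasDerivAt (fun t' : ℝ => Real.exp (-(x+y)/t'))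
      (Real.exp (-(x+y)/t) * ((0 * t - -(x+y) * 1)/t^2)) t := by
    exact ((hasDerivAt_const t (-(x+y))).div (hasDerivAt_id t) ht.ne').exp
  have hcosh : HasDerivAt (fun t' : ℝ => Real.cosh (2 * Real.sqrt (x*y) / t'))
      (Real.sinh (2 * Real.sqrt (x*y) / t) * ((0 * t - (2 * Real.sqrt (x*y)) * 1)/t^2)) t :=
    ((hasDerivAt_const t (2 * Real.sqrt (x*y))).div (hasDerivAt_id t) ht.ne').cosh
  have H := (hc1.mul hexp).mul hcosh
  convert H using 1
  all_goals try rfl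
  have hr : (Real.pi * t * y) ^ (-(1:ℝ)/2 - 1)
      = (Real.pi * t * y) ^ (-(1:ℝ)/2) / (Real.pi * t * y) := by
    rw [show (-(1:ℝ)/2 - 1) = (-(1:ℝ)/2) + (-1) by ring, Real.rpow_add hpos,
      Real.rpow_neg_one, ← div_eq_mul_inv]
  simp only [Pi.mul_apply]
  rw [hr]
  have hne : Real.pi * t * y ≠ 0 := hpos.ne'
  generalize (Real.pi * t * y) ^ (-(1:ℝ)/2) = c
  field_simp
  ring

/-- The fundamental-solution kernel for u_t = x u_xx + (1/2) u_x. -/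
theorem stmt_12 (y : ℝ) (hy : 0 < y) :
    ∀ t x : ℝ, 0 < t → 0 < x →
      let Kf : ℝ → ℝ → ℝ := fun t x =>
        (Real.pi * t * y) ^ (-(1:ℝ)/2) * Real.exp (-(x+y)/t)
          * Real.cosh (2 * Real.sqrt (x*y) / t)
      deriv (fun t' => Kf t' x) t
        = x * deriv (fun x' => deriv (fun x'' => Kf t x'') x') x
          + (1/2) * deriv (fun x' => Kf t x') x := by
  intro t x ht hx Kf
  have hxy : 0 < x * y := mul_pos hx hy
  have hs : 0 < Real.sqrt (x*y) := Real.sqrt_pos.mpr hxy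
  have hs2 : (Real.sqrt (x*y))^2 = x * y := Real.sq_sqrt hxy.le
  have hKt := (auxKt y t x hy ht hx).deriv
  have hev : (fun x' => deriv (fun x'' => Kf t x'') x') =ᶠ[nhds x]
      (fun u => (Real.pi * t * y) ^ (-(1:ℝ)/2) * Real.exp (-(u+y)/t) *
        (Real.sinh (2 * Real.sqrt (u*y) / t) * y / (Real.sqrt (u*y) * t)
          - Real.cosh (2 * Real.sqrt (u*y) / t) / t)) := by
    filter_upwards [Ioi_mem_nhds hx] with a ha
    exact (auxKx y t hy ht a ha).deriv
  have hKx := (auxKx y t hy ht x hx).deriv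
  have hKxx := (auxKxx y t hy ht x hx).deriv
  show deriv (fun t' => (Real.pi * t' * y) ^ (-(1:ℝ)/2) * Real.exp (-(x+y)/t')
          * Real.cosh (2 * Real.sqrt (x*y) / t')) t
      = x * deriv (fun x' => deriv (fun x'' => (Real.pi * t * y) ^ (-(1:ℝ)/2)
            * Real.exp (-(x''+y)/t) * Real.cosh (2 * Real.sqrt (x''*y) / t)) x') x
        + (1/2) * deriv (fun x' => (Real.pi * t * y) ^ (-(1:ℝ)/2)
            * Real.exp (-(x'+y)/t) * Real.cosh (2 * Real.sqrt (x'*y) / t)) x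
  rw [hKt, hev.deriv_eq, hKxx, hKx]
  set s := Real.sqrt (x*y) with hsdef
  set c := (Real.pi * t * y) ^ (-(1:ℝ)/2) with hcdef
  set E := Real.exp (-(x+y)/t) with hEdef
  set C := Real.cosh (2 * s / t) with hCdef
  set S := Real.sinh (2 * s / t) with hSdef
  have hyx : y = s^2/x := by rw [hs2]; field_simp
  rw [hyx]
  field_simp
  ring
end

section
/- For t > 0, x > 0, y > 0, the function K(t,x) = (π t x)^{-1/2} exp(−(x+y)/t) sinh(2√(xy)/t) satisfies K_t = x K_xx + (3/2) K_x. -/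
open Real

private lemma hasDerivAt_A (c : ℝ) (hc : 0 < c) (x : ℝ) (hx : 0 < x) :
    HasDerivAt (fun u : ℝ => (c * u) ^ (-(1:ℝ)/2))
      (((-(1:ℝ)/2) * (c * x) ^ (-(1:ℝ)/2 - 1)) * c) x := by
  have h1 : HasDerivAt (fun u : ℝ => c * u) c x := by
    simpa using (hasDerivAt_id x).const_mul c
  have h2 := Real.hasDerivAt_rpow_const (x := c * x) (p := -(1:ℝ)/2)
      (Or.inl (mul_pos hc hx).ne')
  simpa [Function.comp_def] using h2.comp x h1

private lemma hasDerivAt_E (t y : ℝ) (x : ℝ) :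
    HasDerivAt (fun x' : ℝ => Real.exp (-(x'+y)/t))
      (Real.exp (-(x+y)/t) * (-1/t)) x := by
  have h : HasDerivAt (fun x' : ℝ => -(x'+y)/t) (-1/t) x := by
    simpa using (((hasDerivAt_id x).add_const y).neg).div_const t
  exact h.exp

private lemma hasDerivAt_s (y : ℝ) (hy : 0 < y) (x : ℝ) (hx : 0 < x) :
    HasDerivAt (fun x' : ℝ => Real.sqrt (x'*y))
      (1 / (2 * Real.sqrt (x*y)) * y) x := by
  have h1 : HasDerivAt (fun x' : ℝ => x' * y) y x := by
    simpa using (hasDerivAt_id x).mul_const y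
  simpa [Function.comp_def] using
    (Real.hasDerivAt_sqrt (mul_pos hx hy).ne').comp x h1

private lemma hasDerivAt_Sx (t y : ℝ) (hy : 0 < y) (x : ℝ) (hx : 0 < x) :
    HasDerivAt (fun x' : ℝ => Real.sinh (2 * Real.sqrt (x'*y) / t))
      (Real.cosh (2 * Real.sqrt (x*y) / t) * (2 * (1 / (2 * Real.sqrt (x*y)) * y) / t)) x :=
  (((hasDerivAt_s y hy x hx).const_mul 2).div_const t).sinh

private lemma hasDerivAt_Cx (t y : ℝ) (hy : 0 < y) (x : ℝ) (hx : 0 < x) :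
    HasDerivAt (fun x' : ℝ => Real.cosh (2 * Real.sqrt (x'*y) / t))
      (Real.sinh (2 * Real.sqrt (x*y) / t) * (2 * (1 / (2 * Real.sqrt (x*y)) * y) / t)) x :=
  (((hasDerivAt_s y hy x hx).const_mul 2).div_const t).cosh

/-- cleaned first x-derivative -/
noncomputable def Fd (y t x : ℝ) : ℝ :=
  (Real.pi * t * x) ^ (-(1:ℝ)/2) * Real.exp (-(x+y)/t) *
    ((-1/(2*x) - 1/t) * Real.sinh (2 * Real.sqrt (x*y) / t)
      + Real.sqrt (x*y) / (t*x) * Real.cosh (2 * Real.sqrt (x*y) / t))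

private lemma hasDerivAt_K_x (t y : ℝ) (ht : 0 < t) (hy : 0 < y) (x : ℝ) (hx : 0 < x) :
    HasDerivAt (fun x' => (Real.pi * t * x') ^ (-(1:ℝ)/2) * Real.exp (-(x'+y)/t)
        * Real.sinh (2 * Real.sqrt (x'*y) / t)) (Fd y t x) x := by
  have hA := hasDerivAt_A (Real.pi * t) (mul_pos Real.pi_pos ht) x hx
  have hE := hasDerivAt_E t y x
  have hS := hasDerivAt_Sx t y hy x hx
  have hmul := (hA.mul hE).mul hS
  have hxy : (0:ℝ) < x * y := mul_pos hx hy
  have hpos : (0:ℝ) < Real.pi * t * x := mul_pos (mul_pos Real.pi_pos ht) hx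
  refine hmul.congr_deriv ?_; symm; simp only [Pi.mul_apply]
  have hA1 : (Real.pi * t * x) ^ (-(1:ℝ)/2 - 1)
      = (Real.pi * t * x) ^ (-(1:ℝ)/2) / (Real.pi * t * x) := by
    rw [Real.rpow_sub hpos, Real.rpow_one]
  rw [Fd, hA1]
  set s := Real.sqrt (x*y) with hsdef
  have hs0 : 0 < s := Real.sqrt_pos.mpr hxy
  have hx2 : x = s*s/y := by
    rw [hsdef, Real.mul_self_sqrt hxy.le]; field_simp
  set A := (Real.pi * t * x) ^ (-(1:ℝ)/2)
  set E := Real.exp (-(x+y)/t)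
  set S := Real.sinh (2 * s / t)
  set C := Real.cosh (2 * s / t)
  rw [hx2]
  field_simp
  ring

private lemma hasDerivAt_Fd (t y : ℝ) (ht : 0 < t) (hy : 0 < y) (x : ℝ) (hx : 0 < x) :
    HasDerivAt (fun x' => Fd y t x')
      ( ((((-(1:ℝ)/2) * (Real.pi * t * x) ^ (-(1:ℝ)/2 - 1)) * (Real.pi * t))
            * Real.exp (-(x+y)/t)
          + (Real.pi * t * x) ^ (-(1:ℝ)/2) * (Real.exp (-(x+y)/t) * (-1/t)))
          * ((-1/(2*x) - 1/t) * Real.sinh (2 * Real.sqrt (x*y) / t)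
              + Real.sqrt (x*y) / (t*x) * Real.cosh (2 * Real.sqrt (x*y) / t))
        + ((Real.pi * t * x) ^ (-(1:ℝ)/2) * Real.exp (-(x+y)/t))
          * ( ((0 * (2*x) - (-1) * (2*1)) / (2*x)^2 - 0)
                * Real.sinh (2 * Real.sqrt (x*y) / t)
              + (-1/(2*x) - 1/t)
                * (Real.cosh (2 * Real.sqrt (x*y) / t)
                    * (2 * (1 / (2 * Real.sqrt (x*y)) * y) / t))
            + ( ((1 / (2 * Real.sqrt (x*y)) * y) * (t*x) - Real.sqrt (x*y) * (t*1)) / (t*x)^2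
                  * Real.cosh (2 * Real.sqrt (x*y) / t)
                + Real.sqrt (x*y) / (t*x)
                  * (Real.sinh (2 * Real.sqrt (x*y) / t)
                      * (2 * (1 / (2 * Real.sqrt (x*y)) * y) / t)) ) ) ) x := by
  have hA := hasDerivAt_A (Real.pi * t) (mul_pos Real.pi_pos ht) x hx
  have hE := hasDerivAt_E t y x
  have hS := hasDerivAt_Sx t y hy x hx
  have hC := hasDerivAt_Cx t y hy x hx
  have hs := hasDerivAt_s y hy x hx
  have hm1 : HasDerivAt (fun x' : ℝ => -1/(2*x') - 1/t)
      ((0 * (2*x) - (-1) * (2*1)) / (2*x)^2 - 0) x := by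
    exact (((hasDerivAt_const x (-1:ℝ)).div ((hasDerivAt_id x).const_mul 2)
      (by positivity)).sub_const (1/t)).congr_deriv (by simp only [id_eq]; ring)
  have hm2 : HasDerivAt (fun x' : ℝ => Real.sqrt (x'*y) / (t*x'))
      (((1 / (2 * Real.sqrt (x*y)) * y) * (t*x) - Real.sqrt (x*y) * (t*1)) / (t*x)^2) x := by
    exact hs.div ((hasDerivAt_id x).const_mul t) (by positivity)
  exact (hA.mul hE).mul ((hm1.mul hS).add (hm2.mul hC))

private lemma hasDerivAt_K_t (t y x : ℝ) (ht : 0 < t) (hy : 0 < y) (hx : 0 < x) :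
    HasDerivAt (fun t' => (Real.pi * t' * x) ^ (-(1:ℝ)/2) * Real.exp (-(x+y)/t')
        * Real.sinh (2 * Real.sqrt (x*y) / t'))
      ( ((((-(1:ℝ)/2) * (Real.pi * t * x) ^ (-(1:ℝ)/2 - 1)) * (Real.pi * 1 * x))
            * Real.exp (-(x+y)/t)
          + (Real.pi * t * x) ^ (-(1:ℝ)/2)
            * (Real.exp (-(x+y)/t) * ((0 * t - (-(x+y)) * 1) / t^2)))
          * Real.sinh (2 * Real.sqrt (x*y) / t)
        + ((Real.pi * t * x) ^ (-(1:ℝ)/2) * Real.exp (-(x+y)/t))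
          * (Real.cosh (2 * Real.sqrt (x*y) / t)
              * ((0 * t - (2 * Real.sqrt (x*y)) * 1) / t^2)) ) t := by
  have hinner : HasDerivAt (fun t' : ℝ => Real.pi * t' * x) (Real.pi * 1 * x) t :=
    ((hasDerivAt_id t).const_mul Real.pi).mul_const x
  have hAt : HasDerivAt (fun t' : ℝ => (Real.pi * t' * x) ^ (-(1:ℝ)/2))
      (((-(1:ℝ)/2) * (Real.pi * t * x) ^ (-(1:ℝ)/2 - 1)) * (Real.pi * 1 * x)) t := by
    have h2 := Real.hasDerivAt_rpow_const (x := Real.pi * t * x) (p := -(1:ℝ)/2)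
      (Or.inl (by positivity))
    simpa [Function.comp_def] using h2.comp t hinner
  have hEt : HasDerivAt (fun t' : ℝ => Real.exp (-(x+y)/t'))
      (Real.exp (-(x+y)/t) * ((0 * t - (-(x+y)) * 1) / t^2)) t :=
    ((hasDerivAt_const t (-(x+y))).div (hasDerivAt_id t) ht.ne').exp
  have hSt : HasDerivAt (fun t' : ℝ => Real.sinh (2 * Real.sqrt (x*y) / t'))
      (Real.cosh (2 * Real.sqrt (x*y) / t) * ((0 * t - (2 * Real.sqrt (x*y)) * 1) / t^2)) t :=
    ((hasDerivAt_const t (2 * Real.sqrt (x*y))).div (hasDerivAt_id t) ht.ne').sinh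
  exact (hAt.mul hEt).mul hSt

/-- The fundamental-solution kernel for u_t = x u_xx + (3/2) u_x. -/
theorem stmt_13 (y : ℝ) (hy : 0 < y) :
    ∀ t x : ℝ, 0 < t → 0 < x →
      let Kf : ℝ → ℝ → ℝ := fun t x =>
        (Real.pi * t * x) ^ (-(1:ℝ)/2) * Real.exp (-(x+y)/t)
          * Real.sinh (2 * Real.sqrt (x*y) / t)
      deriv (fun t' => Kf t' x) t
        = x * deriv (fun x' => deriv (fun x'' => Kf t x'') x') x
          + (3/2) * deriv (fun x' => Kf t x') x := by
  intro t x ht hx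
  intro Kf
  have hxy : (0:ℝ) < x * y := mul_pos hx hy
  have hpos : (0:ℝ) < Real.pi * t * x := mul_pos (mul_pos Real.pi_pos ht) hx
  have hEv : (fun x' => deriv (fun x'' => Kf t x'') x') =ᶠ[nhds x] (fun x' => Fd y t x') := by
    filter_upwards [eventually_gt_nhds hx] with x' hx'
    exact (hasDerivAt_K_x t y ht hy x' hx').deriv
  have h2 : deriv (fun x' => deriv (fun x'' => Kf t x'') x') x
      = deriv (fun x' => Fd y t x') x := hEv.deriv_eq
  rw [h2, (hasDerivAt_Fd t y ht hy x hx).deriv, (hasDerivAt_K_t t y x ht hy hx).deriv,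
    (hasDerivAt_K_x t y ht hy x hx).deriv]
  have hA1 : (Real.pi * t * x) ^ (-(1:ℝ)/2 - 1)
      = (Real.pi * t * x) ^ (-(1:ℝ)/2) / (Real.pi * t * x) := by
    rw [Real.rpow_sub hpos, Real.rpow_one]
  rw [Fd, hA1]
  set s := Real.sqrt (x*y) with hsdef
  have hs0 : 0 < s := Real.sqrt_pos.mpr hxy
  have hx2 : x = s*s/y := by
    rw [hsdef, Real.mul_self_sqrt hxy.le]; field_simp
  set A := (Real.pi * t * x) ^ (-(1:ℝ)/2)
  set E := Real.exp (-(x+y)/t)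
  set S := Real.sinh (2 * s / t)
  set C := Real.cosh (2 * s / t)
  rw [hx2]
  field_simp
  ring
end

section
/- Let b ≠ 1 and let u(t,x) solve u_t = x u_xx + b u_x. Then for each ε with 1 + εt > 0, the function ũ(t,x) = (1+εt)^{-b} exp(−εx/(1+εt)) · u(t/(1+εt), x/(1+εt)²) also solves the same equation. In particular, applying this to the stationary solution u = c₀ + c₁ x^{1−b} yields a solution for all t with 1+εt > 0, x > 0. -/
open Real Filter

set_option maxHeartbeats 1000000 in
lemma stmt_14_aux (b ε t x : ℝ) (hs : 0 < 1 + ε*t) (u : ℝ → ℝ → ℝ)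
    (ux : ℝ → ℝ) (uxx : ℝ)
    (L : ℝ × ℝ →L[ℝ] ℝ)
    (hfd : HasFDerivAt (fun p : ℝ×ℝ => u p.1 p.2) L (t/(1+ε*t), x/(1+ε*t)^2))
    (hL2 : L (0,1) = ux (x/(1+ε*t)^2))
    (hux : ∀ᶠ q in nhds (x/(1+ε*t)^2),
      HasDerivAt (fun q' => u (t/(1+ε*t)) q') (ux q) q)
    (huxx : HasDerivAt ux uxx (x/(1+ε*t)^2))
    (hpde : L (1,0) = (x/(1+ε*t)^2) * uxx + b * ux (x/(1+ε*t)^2)) :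
    deriv (fun t' => (1+ε*t')^(-b) * Real.exp (-(ε*x)/(1+ε*t'))
        * u (t'/(1+ε*t')) (x/(1+ε*t')^2)) t
      = x * deriv (fun x' => deriv (fun x'' => (1+ε*t)^(-b)
            * Real.exp (-(ε*x'')/(1+ε*t)) * u (t/(1+ε*t)) (x''/(1+ε*t)^2)) x') x
        + b * deriv (fun x' => (1+ε*t)^(-b) * Real.exp (-(ε*x')/(1+ε*t))
            * u (t/(1+ε*t)) (x'/(1+ε*t)^2)) x := by
  have hs' : (1+ε*t) ≠ 0 := hs.ne'
  have key1 : (1+ε*t)^(-b-1) = (1+ε*t)^(-b) / (1+ε*t) := by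
    rw [Real.rpow_sub hs, Real.rpow_one]
  have hbase : HasDerivAt (fun t' : ℝ => 1 + ε*t') ε t := by
    simpa using ((hasDerivAt_id t).const_mul ε).const_add 1
  -- t-derivative of the rpow factor
  have h_a : HasDerivAt (fun t' : ℝ => (1+ε*t')^(-b))
      (-(b*ε) * (1+ε*t)^(-b) / (1+ε*t)) t := by
    have h := hbase.rpow_const (p := -b) (Or.inl hs')
    convert h using 1
    rw [key1]
    ring
  -- t-derivative of the exp factor
  have h_exp : HasDerivAt (fun t' : ℝ => Real.exp (-(ε*x)/(1+ε*t')))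
      (Real.exp (-(ε*x)/(1+ε*t)) * (ε^2*x/(1+ε*t)^2)) t := by
    have harg : HasDerivAt (fun t' : ℝ => -(ε*x)/(1+ε*t')) (ε^2*x/(1+ε*t)^2) t := by
      have h := (hbase.inv hs').const_mul (-(ε*x))
      refine h.congr_deriv ?_
      ring
    simpa using harg.exp
  -- t-derivative of the u factor
  have h_tau : HasDerivAt (fun t' : ℝ => t'/(1+ε*t')) (1/(1+ε*t)^2) t := by
    have h := (hasDerivAt_id t).div hbase hs'
    refine h.congr_deriv ?_
    simp only [id_eq]
    ring
  have h_xi : HasDerivAt (fun t' : ℝ => x/(1+ε*t')^2) (-2*ε*x/(1+ε*t)^3) t := by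
    have hsq : HasDerivAt (fun t' : ℝ => (1+ε*t')^2) (2*(1+ε*t)*ε) t := by
      have h := hbase.pow 2
      refine h.congr_deriv ?_
      push_cast
      ring
    have h := (hsq.inv (pow_ne_zero 2 hs')).const_mul x
    refine h.congr_deriv ?_
    set s := 1+ε*t with hsdef
    have hns : s ≠ 0 := hs.ne'
    field_simp
  have h_u : HasDerivAt (fun t' : ℝ => u (t'/(1+ε*t')) (x/(1+ε*t')^2))
      (L (1/(1+ε*t)^2, -2*ε*x/(1+ε*t)^3)) t :=
    by have h := hfd.comp_hasDerivAt t (h_tau.prodMk h_xi); exact h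
  have hLlin : L (1/(1+ε*t)^2, -2*ε*x/(1+ε*t)^3)
      = (1/(1+ε*t)^2) * L (1,0) + (-2*ε*x/(1+ε*t)^3) * L (0,1) := by
    have hp : ((1/(1+ε*t)^2 : ℝ), (-2*ε*x/(1+ε*t)^3 : ℝ))
        = (1/(1+ε*t)^2) • ((1:ℝ),(0:ℝ)) + (-2*ε*x/(1+ε*t)^3) • ((0:ℝ),(1:ℝ)) := by
      simp [Prod.ext_iff]
    rw [hp, map_add, map_smul, map_smul, smul_eq_mul, smul_eq_mul]
  have hDt : deriv (fun t' => (1+ε*t')^(-b) * Real.exp (-(ε*x)/(1+ε*t'))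
      * u (t'/(1+ε*t')) (x/(1+ε*t')^2)) t
      = ((-(b*ε) * (1+ε*t)^(-b) / (1+ε*t)) * Real.exp (-(ε*x)/(1+ε*t))
          + (1+ε*t)^(-b) * (Real.exp (-(ε*x)/(1+ε*t)) * (ε^2*x/(1+ε*t)^2)))
            * u (t/(1+ε*t)) (x/(1+ε*t)^2)
        + ((1+ε*t)^(-b) * Real.exp (-(ε*x)/(1+ε*t)))
            * ((1/(1+ε*t)^2) * ((x/(1+ε*t)^2) * uxx + b * ux (x/(1+ε*t)^2))
              + (-2*ε*x/(1+ε*t)^3) * ux (x/(1+ε*t)^2)) := by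
    have h : HasDerivAt (fun t' => (1+ε*t')^(-b) * Real.exp (-(ε*x)/(1+ε*t'))
        * u (t'/(1+ε*t')) (x/(1+ε*t')^2)) _ t := (h_a.mul h_exp).mul h_u
    rw [h.deriv, hLlin, hL2, hpde]
    rfl
  -- the first x-derivative, as a function near x
  set P : ℝ → ℝ := fun x' => (1+ε*t)^(-b) * Real.exp (-(ε*x')/(1+ε*t))
      * (-(ε/(1+ε*t)) * u (t/(1+ε*t)) (x'/(1+ε*t)^2)
          + ux (x'/(1+ε*t)^2) * (1/(1+ε*t)^2)) with hP_def
  have hmap : Filter.Tendsto (fun x' : ℝ => x'/(1+ε*t)^2) (nhds x)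
      (nhds (x/(1+ε*t)^2)) := (continuous_id.div_const _).tendsto x
  have hP : ∀ᶠ x' in nhds x, HasDerivAt
      (fun x'' => (1+ε*t)^(-b) * Real.exp (-(ε*x'')/(1+ε*t))
        * u (t/(1+ε*t)) (x''/(1+ε*t)^2)) (P x') x' := by
    filter_upwards [hmap.eventually hux] with x' hx'
    have harg : HasDerivAt (fun x'' : ℝ => -(ε*x'')/(1+ε*t)) (-(ε/(1+ε*t))) x' := by
      have h := (((hasDerivAt_id x').const_mul ε).neg).div_const (1+ε*t)
      refine h.congr_deriv ?_
      ring
    have hexp : HasDerivAt (fun x'' : ℝ => Real.exp (-(ε*x'')/(1+ε*t)))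
        (Real.exp (-(ε*x')/(1+ε*t)) * (-(ε/(1+ε*t)))) x' := harg.exp
    have hdiv : HasDerivAt (fun x'' : ℝ => x''/(1+ε*t)^2) (1/(1+ε*t)^2) x' := by
      simpa using (hasDerivAt_id x').div_const ((1+ε*t)^2)
    have hinner : HasDerivAt (fun x'' : ℝ => u (t/(1+ε*t)) (x''/(1+ε*t)^2))
        (ux (x'/(1+ε*t)^2) * (1/(1+ε*t)^2)) x' := hx'.comp x' hdiv
    have h := (hexp.const_mul ((1+ε*t)^(-b))).mul hinner
    refine h.congr_deriv ?_
    simp only [hP_def]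
    ring
  have hDx : deriv (fun x' => (1+ε*t)^(-b) * Real.exp (-(ε*x')/(1+ε*t))
      * u (t/(1+ε*t)) (x'/(1+ε*t)^2)) x = P x := (hP.self_of_nhds).deriv
  have hderiv_eq : deriv (fun x'' => (1+ε*t)^(-b) * Real.exp (-(ε*x'')/(1+ε*t))
      * u (t/(1+ε*t)) (x''/(1+ε*t)^2)) =ᶠ[nhds x] P := by
    filter_upwards [hP] with x' h using h.deriv
  have hPx : HasDerivAt P
      ((1+ε*t)^(-b) * Real.exp (-(ε*x)/(1+ε*t))
        * ((ε/(1+ε*t))^2 * u (t/(1+ε*t)) (x/(1+ε*t)^2)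
          - 2*(ε/(1+ε*t)) * ux (x/(1+ε*t)^2) / (1+ε*t)^2
          + uxx/(1+ε*t)^4)) x := by
    have harg : HasDerivAt (fun x'' : ℝ => -(ε*x'')/(1+ε*t)) (-(ε/(1+ε*t))) x := by
      have h := (((hasDerivAt_id x).const_mul ε).neg).div_const (1+ε*t)
      refine h.congr_deriv ?_
      ring
    have hexp : HasDerivAt (fun x'' : ℝ => Real.exp (-(ε*x'')/(1+ε*t)))
        (Real.exp (-(ε*x)/(1+ε*t)) * (-(ε/(1+ε*t)))) x := harg.exp
    have hdiv : HasDerivAt (fun x'' : ℝ => x''/(1+ε*t)^2) (1/(1+ε*t)^2) x := by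
      simpa using (hasDerivAt_id x).div_const ((1+ε*t)^2)
    have hu0 : HasDerivAt (fun x'' : ℝ => u (t/(1+ε*t)) (x''/(1+ε*t)^2))
        (ux (x/(1+ε*t)^2) * (1/(1+ε*t)^2)) x := (hux.self_of_nhds).comp x hdiv
    have hux0 : HasDerivAt (fun x'' : ℝ => ux (x''/(1+ε*t)^2))
        (uxx * (1/(1+ε*t)^2)) x := huxx.comp x hdiv
    have hsum : HasDerivAt
        (fun x'' : ℝ => -(ε/(1+ε*t)) * u (t/(1+ε*t)) (x''/(1+ε*t)^2)
          + ux (x''/(1+ε*t)^2) * (1/(1+ε*t)^2))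
        (-(ε/(1+ε*t)) * (ux (x/(1+ε*t)^2) * (1/(1+ε*t)^2))
          + (uxx * (1/(1+ε*t)^2)) * (1/(1+ε*t)^2)) x :=
      (hu0.const_mul (-(ε/(1+ε*t)))).add (hux0.mul_const (1/(1+ε*t)^2))
    have h := (hexp.const_mul ((1+ε*t)^(-b))).mul hsum
    refine h.congr_deriv ?_
    set s := 1+ε*t with hsdef
    have hns : s ≠ 0 := hs.ne'
    generalize s ^ (-b) = A
    generalize Real.exp (-(ε*x)/s) = Ex
    generalize u (t/s) (x/s^2) = U
    generalize ux (x/s^2) = VX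
    field_simp
    ring
  have hDxx : deriv (fun x' => deriv (fun x'' => (1+ε*t)^(-b)
      * Real.exp (-(ε*x'')/(1+ε*t)) * u (t/(1+ε*t)) (x''/(1+ε*t)^2)) x') x
      = (1+ε*t)^(-b) * Real.exp (-(ε*x)/(1+ε*t))
        * ((ε/(1+ε*t))^2 * u (t/(1+ε*t)) (x/(1+ε*t)^2)
          - 2*(ε/(1+ε*t)) * ux (x/(1+ε*t)^2) / (1+ε*t)^2
          + uxx/(1+ε*t)^4) := by
    rw [hderiv_eq.deriv_eq, hPx.deriv]
  rw [hDt, hDxx, hDx]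
  simp only [hP_def]
  set s := 1+ε*t with hsdef
  have hns : s ≠ 0 := hs.ne'
  generalize s ^ (-b) = A
  generalize Real.exp (-(ε*x)/s) = Ex
  generalize u (t/s) (x/s^2) = U
  generalize ux (x/s^2) = VX
  field_simp
  ring


open Real Filter

set_option maxHeartbeats 1000000 in
theorem stmt_14_part1_test (b ε : ℝ) (u : ℝ → ℝ → ℝ)
    (hC : ContDiff ℝ 2 (fun p : ℝ × ℝ => u p.1 p.2))
    (hu : ∀ t x : ℝ,
      deriv (fun t' => u t' x) t
        = x * deriv (fun x' => deriv (fun x'' => u t x'') x') x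
          + b * deriv (fun x' => u t x') x)
    (t x : ℝ) (ht : 1 + ε*t > 0) :
    deriv (fun t' => (1+ε*t')^(-b) * Real.exp (-(ε*x)/(1+ε*t'))
        * u (t'/(1+ε*t')) (x/(1+ε*t')^2)) t
      = x * deriv (fun x' => deriv (fun x'' => (1+ε*t)^(-b)
            * Real.exp (-(ε*x'')/(1+ε*t)) * u (t/(1+ε*t)) (x''/(1+ε*t)^2)) x') x
        + b * deriv (fun x' => (1+ε*t)^(-b) * Real.exp (-(ε*x')/(1+ε*t))
            * u (t/(1+ε*t)) (x'/(1+ε*t)^2)) x := by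
  have hdF : Differentiable ℝ (fun p : ℝ × ℝ => u p.1 p.2) :=
    hC.differentiable (by norm_num)
  set τ : ℝ := t/(1+ε*t)
  set ξ : ℝ := x/(1+ε*t)^2
  set F : ℝ × ℝ → ℝ := fun p => u p.1 p.2 with hF_def
  set L : ℝ × ℝ →L[ℝ] ℝ := fderiv ℝ F (τ, ξ) with hL_def
  have hfd : HasFDerivAt F L (τ, ξ) := (hdF _).hasFDerivAt
  -- partial derivative in x at arbitrary points
  have hq : ∀ q : ℝ, HasDerivAt (fun q' => u τ q') (fderiv ℝ F (τ, q) (0,1)) q := by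
    intro q
    have h := ((hdF (τ, q)).hasFDerivAt).comp_hasDerivAt q
      ((hasDerivAt_const q τ).prodMk (hasDerivAt_id q))
    exact h
  set ux : ℝ → ℝ := fun q => deriv (fun q' => u τ q') q with hux_def
  have hux_all : ∀ q : ℝ, HasDerivAt (fun q' => u τ q') (ux q) q := fun q =>
    ((hq q).differentiableAt).hasDerivAt
  have hL2 : L (0,1) = ux ξ := ((hq ξ).deriv).symm
  -- differentiability of ux
  have hux_eq : ux = fun q => fderiv ℝ F (τ, q) (0,1) :=
    funext fun q => (hq q).deriv
  have hg : ContDiff ℝ 1 (fun q : ℝ => fderiv ℝ F (τ, q) (0,1)) :=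
    ((hC.fderiv_right (by norm_num)).comp
      (contDiff_const.prodMk contDiff_id)).clm_apply contDiff_const
  have hdux : DifferentiableAt ℝ ux ξ := by
    rw [hux_eq]; exact (hg.differentiable one_ne_zero) ξ
  have huxx : HasDerivAt ux (deriv ux ξ) ξ := hdux.hasDerivAt
  -- time partial derivative
  have hL1 : HasDerivAt (fun t' => u t' ξ) (L (1,0)) τ := by
    have h := hfd.comp_hasDerivAt τ ((hasDerivAt_id τ).prodMk (hasDerivAt_const τ ξ))
    exact h
  have hpde : L (1,0) = ξ * deriv ux ξ + b * ux ξ := by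
    rw [← hL1.deriv]
    exact hu τ ξ
  exact stmt_14_aux b ε t x ht u ux (deriv ux ξ) L hfd hL2
    (Filter.Eventually.of_forall hux_all) huxx hpde

set_option maxHeartbeats 1000000 in
theorem stmt_14_part2_test (b ε c₀ c₁ : ℝ) (t x : ℝ) (ht : 1 + ε*t > 0) (hx : 0 < x) :
    deriv (fun t' => (1 + ε*t') ^ (-b) * Real.exp (-(ε*x)/(1+ε*t'))
        * (c₀ + c₁ * (1+ε*t') ^ (2*(b-1)) * x ^ (1-b))) t
      = x * deriv (fun x' => deriv (fun x'' => (1 + ε*t) ^ (-b)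
            * Real.exp (-(ε*x'')/(1+ε*t)) * (c₀ + c₁ * (1+ε*t) ^ (2*(b-1)) * x'' ^ (1-b))) x') x
        + b * deriv (fun x' => (1 + ε*t) ^ (-b) * Real.exp (-(ε*x')/(1+ε*t))
            * (c₀ + c₁ * (1+ε*t) ^ (2*(b-1)) * x' ^ (1-b))) x := by
  have hkey : ∀ t' x' : ℝ, 0 < 1+ε*t' → 0 < x' →
      (1+ε*t')^(-b) * Real.exp (-(ε*x')/(1+ε*t'))
        * (c₀ + c₁ * (1+ε*t')^(2*(b-1)) * x'^(1-b))
      = (1+ε*t')^(-b) * Real.exp (-(ε*x')/(1+ε*t'))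
        * (c₀ + c₁ * (x'/(1+ε*t')^2)^(1-b)) := by
    intro t' x' h1 h2
    have hd : (x'/(1+ε*t')^2)^(1-b) = x'^(1-b) / ((1+ε*t')^2)^(1-b) :=
      Real.div_rpow h2.le (sq_nonneg _) _
    have h3 : (((1+ε*t')^2 : ℝ))^(1-b) = (1+ε*t')^(2*(1-b)) := by
      rw [← Real.rpow_natCast (1+ε*t') 2, ← Real.rpow_mul h1.le]
      norm_num
    have h4 : ((1+ε*t') : ℝ)^(2*(b-1)) = ((1+ε*t')^(2*(1-b)))⁻¹ := by
      rw [show (2*(b-1):ℝ) = -(2*(1-b)) by ring, Real.rpow_neg h1.le]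
    rw [hd, h3, h4, div_eq_mul_inv]
    ring
  -- eventual positivity
  have hev_s : ∀ᶠ t' in nhds t, 0 < 1 + ε*t' := by
    have hc : Continuous fun t' : ℝ => 1 + ε*t' := by continuity
    exact (hc.tendsto t).eventually (eventually_gt_nhds ht)
  have hev_x : ∀ᶠ x'' in nhds x, (0:ℝ) < x'' := eventually_gt_nhds hx
  have e1 : deriv (fun t' => (1+ε*t')^(-b) * Real.exp (-(ε*x)/(1+ε*t'))
      * (c₀ + c₁ * (1+ε*t')^(2*(b-1)) * x^(1-b))) t
      = deriv (fun t' => (1+ε*t')^(-b) * Real.exp (-(ε*x)/(1+ε*t'))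
      * (c₀ + c₁ * (x/(1+ε*t')^2)^(1-b))) t := by
    apply Filter.EventuallyEq.deriv_eq
    filter_upwards [hev_s] with t' h1 using hkey t' x h1 hx
  have hx_eq : (fun x'' => (1+ε*t)^(-b) * Real.exp (-(ε*x'')/(1+ε*t))
      * (c₀ + c₁ * (1+ε*t)^(2*(b-1)) * x''^(1-b)))
      =ᶠ[nhds x] (fun x'' => (1+ε*t)^(-b) * Real.exp (-(ε*x'')/(1+ε*t))
      * (c₀ + c₁ * (x''/(1+ε*t)^2)^(1-b))) := by
    filter_upwards [hev_x] with x'' h2 using hkey t x'' ht h2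
  have e2 : deriv (fun x' => deriv (fun x'' => (1+ε*t)^(-b)
      * Real.exp (-(ε*x'')/(1+ε*t)) * (c₀ + c₁ * (1+ε*t)^(2*(b-1)) * x''^(1-b))) x') x
      = deriv (fun x' => deriv (fun x'' => (1+ε*t)^(-b)
      * Real.exp (-(ε*x'')/(1+ε*t)) * (c₀ + c₁ * (x''/(1+ε*t)^2)^(1-b))) x') x :=
    (hx_eq.deriv).deriv_eq
  have e3 : deriv (fun x' => (1+ε*t)^(-b) * Real.exp (-(ε*x')/(1+ε*t))
      * (c₀ + c₁ * (1+ε*t)^(2*(b-1)) * x'^(1-b))) x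
      = deriv (fun x' => (1+ε*t)^(-b) * Real.exp (-(ε*x')/(1+ε*t))
      * (c₀ + c₁ * (x'/(1+ε*t)^2)^(1-b))) x := hx_eq.deriv_eq
  rw [e1, e2, e3]
  -- now apply the aux lemma to the stationary solution
  set ξ : ℝ := x/(1+ε*t)^2 with hξ_def
  have hξ : 0 < ξ := div_pos hx (pow_pos ht 2)
  have hexp : (1 - b - 1 : ℝ) = -b := by ring
  set u₀ : ℝ → ℝ → ℝ := fun _ q => c₀ + c₁ * q^(1-b) with hu₀_def
  set ux₀ : ℝ → ℝ := fun q => c₁ * ((1-b) * q^(-b)) with hux₀_def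
  set L : ℝ × ℝ →L[ℝ] ℝ :=
    (c₁ * ((1-b) * ξ^(-b))) • (ContinuousLinearMap.snd ℝ ℝ ℝ) with hL_def
  have hfd : HasFDerivAt (fun p : ℝ × ℝ => u₀ p.1 p.2) L (t/(1+ε*t), ξ) := by
    have hφ : HasDerivAt (fun r : ℝ => c₀ + c₁ * r^(1-b))
        (c₁ * ((1-b) * ξ^(-b))) ξ := by
      have h := ((Real.hasDerivAt_rpow_const (x := ξ) (p := 1-b)
        (Or.inl hξ.ne')).const_mul c₁).const_add c₀
      rw [hexp] at h
      exact h
    have h := hφ.comp_hasFDerivAt (x := ((t/(1+ε*t), ξ) : ℝ × ℝ)) (hasFDerivAt_snd (𝕜 := ℝ) (E := ℝ) (F := ℝ))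
    exact h
  have hL2 : L (0,1) = ux₀ ξ := by
    simp [hL_def, hux₀_def]
  have hL1 : L (1,0) = 0 := by simp [hL_def]
  have hmul : ξ * ξ^(-b-1) = ξ^(-b) := by
    have h := (Real.rpow_add hξ 1 (-b-1)).symm
    rw [Real.rpow_one] at h
    rw [h, show (1 + (-b-1) : ℝ) = -b by ring]
  have hpde : L (1,0) = ξ * (c₁ * ((1-b) * (-b * ξ^(-b-1)))) + b * ux₀ ξ := by
    rw [hL1]
    simp only [hux₀_def]
    linear_combination (b*c₁*(1-b)) * hmul
  have hux : ∀ᶠ q in nhds ξ,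
      HasDerivAt (fun q' => u₀ (t/(1+ε*t)) q') (ux₀ q) q := by
    filter_upwards [eventually_gt_nhds hξ] with q hq
    have h := ((Real.hasDerivAt_rpow_const (x := q) (p := 1-b)
      (Or.inl hq.ne')).const_mul c₁).const_add c₀
    rw [hexp] at h
    exact h
  have huxx : HasDerivAt ux₀ (c₁ * ((1-b) * (-b * ξ^(-b-1)))) ξ :=
    ((Real.hasDerivAt_rpow_const (x := ξ) (p := -b)
      (Or.inl hξ.ne')).const_mul (1-b)).const_mul c₁
  exact stmt_14_aux b ε t x ht u₀ ux₀ (c₁ * ((1-b) * (-b * ξ^(-b-1)))) L hfd hL2 hux huxx hpde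

/-- The projective symmetry of u_t = x u_xx + b u_x maps solutions to
solutions, and applied to the stationary solution c₀ + c₁ x^{1−b} yields an
explicit new solution. -/
theorem stmt_14 (b ε c₀ c₁ : ℝ) (hb : b ≠ 1) (u : ℝ → ℝ → ℝ)
    (hC : ContDiff ℝ 2 (fun p : ℝ × ℝ => u p.1 p.2))
    (hu : ∀ t x : ℝ,
      deriv (fun t' => u t' x) t
        = x * deriv (fun x' => deriv (fun x'' => u t x'') x') x
          + b * deriv (fun x' => u t x') x) :
    (∀ t x : ℝ, 1 + ε*t > 0 →
      let v : ℝ → ℝ → ℝ := fun t x =>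
        (1 + ε*t) ^ (-b) * Real.exp (-(ε*x)/(1+ε*t))
          * u (t/(1+ε*t)) (x/(1+ε*t)^2)
      deriv (fun t' => v t' x) t
        = x * deriv (fun x' => deriv (fun x'' => v t x'') x') x
          + b * deriv (fun x' => v t x') x) ∧
    (∀ t x : ℝ, 1 + ε*t > 0 → 0 < x →
      let w : ℝ → ℝ → ℝ := fun t x =>
        (1 + ε*t) ^ (-b) * Real.exp (-(ε*x)/(1+ε*t))
          * (c₀ + c₁ * (1+ε*t) ^ (2*(b-1)) * x ^ (1-b))
      deriv (fun t' => w t' x) t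
        = x * deriv (fun x' => deriv (fun x'' => w t x'') x') x
          + b * deriv (fun x' => w t x') x) := by
  constructor
  · intro t x ht
    exact stmt_14_part1_test b ε u hC hu t x ht
  · intro t x ht hx
    exact stmt_14_part2_test b ε c₀ c₁ t x ht hx
end
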